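/- Let g₂, g₃ ∈ ℚ and suppose the Weierstrass curve E : y² = x³ − g₂x − g₃ has nonzero discriminant. Then the set of squarefree integers D such that the Mordell–Weil group E_D(ℚ) of the quadratic twist E_D : y² = x³ − g₂D²x − g₃D³ contains a point of finite order greater than 2 is finite. -/

import Mathlib

/-- The short Weierstrass curve `y² = x³ − g₂x − g₃`. -/
def shortCurve {R : Type*} [CommRing R] (g₂ g₃ : R) : WeierstrassCurve R :=
  ⟨0, 0, 0, -g₂, -g₃⟩

/-- The quadratic twist `y² = x³ − g₂D²x − g₃D³`. -/
def twistCurve {R : Type*} [CommRing R] (g₂ g₃ D : R) : WeierstrassCurve R :=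
  ⟨0, 0, 0, -(g₂ * D ^ 2), -(g₃ * D ^ 3)⟩


lemma abs_comb3 (a b c d p q m : ℤ) (hp : |p| ≤ m) (hq : |q| ≤ m) :
    |a * p ^ 3 + b * p ^ 2 * q + c * p * q ^ 2 + d * q ^ 3| ≤ (|a| + |b| + |c| + |d|) * m ^ 3 := by
  have hm : 0 ≤ m := le_trans (abs_nonneg p) hp
  have key : ∀ (co : ℤ) (i j : ℕ), i + j = 3 → |co * p ^ i * q ^ j| ≤ |co| * m ^ 3 := by
    intro co i j hij
    rw [abs_mul, abs_mul, abs_pow, abs_pow]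
    calc |co| * |p| ^ i * |q| ^ j ≤ |co| * m ^ i * m ^ j := by
          gcongr
      _ = |co| * m ^ 3 := by rw [mul_assoc, ← pow_add, hij]
  calc |a * p ^ 3 + b * p ^ 2 * q + c * p * q ^ 2 + d * q ^ 3|
      ≤ |a * p ^ 3 + b * p ^ 2 * q + c * p * q ^ 2| + |d * q ^ 3| := abs_add_le _ _
    _ ≤ |a * p ^ 3 + b * p ^ 2 * q| + |c * p * q ^ 2| + |d * q ^ 3| := by
        gcongr; exact abs_add_le _ _
    _ ≤ |a * p ^ 3| + |b * p ^ 2 * q| + |c * p * q ^ 2| + |d * q ^ 3| := by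
        gcongr; exact abs_add_le _ _
    _ ≤ |a| * m ^ 3 + |b| * m ^ 3 + |c| * m ^ 3 + |d| * m ^ 3 := by
        gcongr
        · simpa using key a 3 0 rfl
        · simpa [mul_assoc] using key b 2 1 rfl
        · simpa [mul_assoc] using key c 1 2 rfl
        · simpa using key d 0 3 rfl
    _ = (|a| + |b| + |c| + |d|) * m ^ 3 := by ring

lemma abs_comb4 (a b c d e p q m : ℤ) (hp : |p| ≤ m) (hq : |q| ≤ m) :
    |a * p ^ 4 + b * p ^ 3 * q + c * p ^ 2 * q ^ 2 + d * p * q ^ 3 + e * q ^ 4| ≤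
      (|a| + |b| + |c| + |d| + |e|) * m ^ 4 := by
  have hm : 0 ≤ m := le_trans (abs_nonneg p) hp
  have key : ∀ (co : ℤ) (i j : ℕ), i + j = 4 → |co * p ^ i * q ^ j| ≤ |co| * m ^ 4 := by
    intro co i j hij
    rw [abs_mul, abs_mul, abs_pow, abs_pow]
    calc |co| * |p| ^ i * |q| ^ j ≤ |co| * m ^ i * m ^ j := by
          gcongr
      _ = |co| * m ^ 4 := by rw [mul_assoc, ← pow_add, hij]
  calc |a * p ^ 4 + b * p ^ 3 * q + c * p ^ 2 * q ^ 2 + d * p * q ^ 3 + e * q ^ 4|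
      ≤ |a * p ^ 4 + b * p ^ 3 * q + c * p ^ 2 * q ^ 2 + d * p * q ^ 3| + |e * q ^ 4| := abs_add_le _ _
    _ ≤ |a * p ^ 4 + b * p ^ 3 * q + c * p ^ 2 * q ^ 2| + |d * p * q ^ 3| + |e * q ^ 4| := by
        gcongr; exact abs_add_le _ _
    _ ≤ |a * p ^ 4 + b * p ^ 3 * q| + |c * p ^ 2 * q ^ 2| + |d * p * q ^ 3| + |e * q ^ 4| := by
        gcongr; exact abs_add_le _ _
    _ ≤ |a * p ^ 4| + |b * p ^ 3 * q| + |c * p ^ 2 * q ^ 2| + |d * p * q ^ 3| + |e * q ^ 4| := by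
        gcongr; exact abs_add_le _ _
    _ ≤ |a| * m ^ 4 + |b| * m ^ 4 + |c| * m ^ 4 + |d| * m ^ 4 + |e| * m ^ 4 := by
        gcongr
        · simpa using key a 4 0 rfl
        · simpa [mul_assoc] using key b 3 1 rfl
        · simpa [mul_assoc] using key c 2 2 rfl
        · simpa [mul_assoc] using key d 1 3 rfl
        · simpa using key e 0 4 rfl
    _ = (|a| + |b| + |c| + |d| + |e|) * m ^ 4 := by ring


def ht (r : ℚ) : ℤ := max |r.num| (r.den : ℤ)

lemma one_le_ht (r : ℚ) : 1 ≤ ht r := le_max_of_le_right (by exact_mod_cast r.pos)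

def fcub (g₂ g₃ : ℚ) (u : ℚ) : ℚ := u ^ 3 - g₂ * u - g₃

def dup (g₂ g₃ : ℚ) (u : ℚ) : ℚ :=
  (u ^ 4 + 2 * g₂ * u ^ 2 + 8 * g₃ * u + g₂ ^ 2) / (4 * (u ^ 3 - g₂ * u - g₃))


set_option maxHeartbeats 1600000 in
lemma exists_height_growth (g₂ g₃ : ℚ) (hd : 4 * g₂ ^ 3 - 27 * g₃ ^ 2 ≠ 0) :
    ∃ C : ℤ, 1 ≤ C ∧ ∀ u : ℚ, fcub g₂ g₃ u ≠ 0 →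
      (ht u) ^ 3 ≤ C * ht (dup g₂ g₃ u) := by
  set n : ℤ := (g₂.den : ℤ) * (g₃.den : ℤ) with hndef
  set α : ℤ := -(g₂.num * (g₃.den : ℤ)) with hαdef
  set β : ℤ := -(g₃.num * (g₂.den : ℤ)) with hβdef
  have hn : 0 < n := by
    rw [hndef]; positivity
  have hden2 : ((g₂.den : ℚ)) ≠ 0 := by exact_mod_cast g₂.den_nz
  have hden3 : ((g₃.den : ℚ)) ≠ 0 := by exact_mod_cast g₃.den_nz
  have hnum2 : (g₂.num : ℚ) = g₂ * (g₂.den : ℚ) := by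
    exact ((div_eq_iff hden2).mp (Rat.num_div_den g₂))
  have hnum3 : (g₃.num : ℚ) = g₃ * (g₃.den : ℚ) := by
    exact ((div_eq_iff hden3).mp (Rat.num_div_den g₃))
  have hα : (α : ℚ) = -g₂ * (n : ℚ) := by
    rw [hαdef, hndef]; push_cast [hnum2]; ring
  have hβ : (β : ℚ) = -g₃ * (n : ℚ) := by
    rw [hβdef, hndef]; push_cast [hnum3]; ring
  set M₁ : ℤ := 4 * α ^ 3 + 27 * β ^ 2 * n with hM₁def
  have hnQ : (n : ℚ) ≠ 0 := by exact_mod_cast hn.ne'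
  have hM₁ : M₁ ≠ 0 := by
    have hcast : (M₁ : ℚ) = (n : ℚ) ^ 3 * (27 * g₃ ^ 2 - 4 * g₂ ^ 3) := by
      rw [hM₁def]; push_cast [hα, hβ]; ring
    have h27 : (27 * g₃ ^ 2 - 4 * g₂ ^ 3) ≠ 0 := fun hc => hd (by linarith)
    have hne : (M₁ : ℚ) ≠ 0 := by
      rw [hcast]; exact mul_ne_zero (pow_ne_zero _ hnQ) h27
    exact_mod_cast hne
  -- the constants
  set KA : ℤ := |(0:ℤ)| + |12 * n| + |(0:ℤ)| + |16 * α| with hKAdef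
  set KB : ℤ := |(-3) * n| + |(0:ℤ)| + |5 * α| + |27 * β| with hKBdef
  set KC : ℤ := |(0:ℤ)| + |4 * n * α ^ 3 + 12 * n ^ 2 * β ^ 2| + |(-(4 * n * α ^ 2 * β))| +
      |(-(8 * n * α * β ^ 2))| with hKCdef
  set KD : ℤ := |3 * n * α ^ 3 + 24 * n ^ 2 * β ^ 2| + |n * α ^ 2 * β| +
      |(-(α ^ 4 + 16 * n * α * β ^ 2))| + |2 * α ^ 3 * β| with hKDdef
  clear_value n α β M₁
  have hKA0 : 0 ≤ KA := by rw [hKAdef]; positivity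
  have hKB0 : 0 ≤ KB := by rw [hKBdef]; positivity
  have hKC0 : 0 ≤ KC := by rw [hKCdef]; positivity
  have hKD0 : 0 ≤ KD := by rw [hKDdef]; positivity
  have hC1 : (1:ℤ) ≤ (KA + KB) * n ^ 3 + (KC + KD) + 1 := by
    have h1 : 0 ≤ (KA + KB) * n ^ 3 := mul_nonneg (by linarith) (pow_pos hn 3).le
    linarith
  clear_value KA KB KC KD
  refine ⟨(KA + KB) * n ^ 3 + (KC + KD) + 1, hC1, ?_⟩
  intro u hfu
  set C : ℤ := (KA + KB) * n ^ 3 + (KC + KD) + 1 with hCdef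
  set p : ℤ := u.num with hpdef
  set q : ℤ := (u.den : ℤ) with hqdef
  have hq0 : 0 < q := by rw [hqdef]; exact_mod_cast u.pos
  have hqQ : (q : ℚ) ≠ 0 := by exact_mod_cast hq0.ne'
  have hu : (u : ℚ) = (p : ℚ) / (q : ℚ) := by rw [hpdef, hqdef]; exact_mod_cast (Rat.num_div_den u).symm
  have hp : (p : ℚ) = u * (q : ℚ) := by rw [hu]; field_simp
  clear_value C p q
  set FF : ℤ := n ^ 2 * p ^ 4 - 2 * α * n * p ^ 2 * q ^ 2 - 8 * β * n * p * q ^ 3 + α ^ 2 * q ^ 4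
    with hFFdef
  set BB : ℤ := 4 * q * (n ^ 2 * p ^ 3 + α * n * p * q ^ 2 + β * n * q ^ 3) with hBBdef
  have hBBQ : (BB : ℚ) = 4 * (n : ℚ) ^ 2 * (q : ℚ) ^ 4 * fcub g₂ g₃ u := by
    rw [hBBdef]; push_cast [hα, hβ, hp, fcub]; ring
  have hFFQ : (FF : ℚ) = (n : ℚ) ^ 2 * (q : ℚ) ^ 4 *
      (u ^ 4 + 2 * g₂ * u ^ 2 + 8 * g₃ * u + g₂ ^ 2) := by
    rw [hFFdef]; push_cast [hα, hβ, hp]; ring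
  have hBB0 : BB ≠ 0 := by
    intro h0
    apply hfu
    have : (BB : ℚ) = 0 := by rw [h0]; norm_num
    rw [hBBQ] at this
    exact (mul_eq_zero.mp this).resolve_left
      (mul_ne_zero (mul_ne_zero (by norm_num) (pow_ne_zero _ hnQ)) (pow_ne_zero _ hqQ))
  clear_value FF BB
  set r : ℚ := dup g₂ g₃ u with hrdef
  have hr : (FF : ℚ) = r * BB := by
    rw [hrdef, dup, hFFQ, hBBQ]
    rw [fcub] at hfu ⊢
    rw [div_mul_eq_mul_div, eq_div_iff (mul_ne_zero four_ne_zero hfu)]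
    ring
  have hrden0 : ((r.den : ℤ)) ≠ 0 := by exact_mod_cast r.den_nz
  have hcross : FF * (r.den : ℤ) = r.num * BB := by
    have hrdenQ : ((r.den : ℚ)) ≠ 0 := by exact_mod_cast r.den_nz
    have hrnum : (r.num : ℚ) = r * (r.den : ℚ) := (div_eq_iff hrdenQ).mp (Rat.num_div_den r)
    have hQ : (FF : ℚ) * (r.den : ℚ) = (r.num : ℚ) * (BB : ℚ) := by
      rw [hr, hrnum]; ring
    exact_mod_cast hQ
  have hcor : IsCoprime (r.num) ((r.den : ℤ)) := by
    rw [Int.isCoprime_iff_gcd_eq_one]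
    simpa [Int.gcd] using r.reduced
  have hdvd_den : ((r.den : ℤ)) ∣ BB := by
    apply (hcor.symm).dvd_of_dvd_mul_left
    exact ⟨FF, by linarith [hcross]⟩
  obtain ⟨k, hk⟩ := hdvd_den
  have hFFk : FF = r.num * k := by
    have h2 : FF * (r.den : ℤ) = (r.num * k) * (r.den : ℤ) := by
      rw [hcross, hk]; ring
    exact mul_right_cancel₀ hrden0 h2
  have hk0 : k ≠ 0 := by
    intro h0; apply hBB0; rw [hk, h0, mul_zero]
  have hkF : k ∣ FF := hFFk ▸ dvd_mul_left k r.num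
  have hkB : k ∣ BB := hk ▸ dvd_mul_left k (r.den : ℤ)
  have hI1 : (12 * n * p ^ 2 * q + 16 * α * q ^ 3) * FF +
      (-3 * n * p ^ 3 + 5 * α * p * q ^ 2 + 27 * β * q ^ 3) * BB = 4 * M₁ * q ^ 7 := by
    rw [hFFdef, hBBdef, hM₁def]; ring
  have hI2 : (4 * q * ((n * α ^ 3 + 3 * n ^ 2 * β ^ 2) * p ^ 2 - n * α ^ 2 * β * p * q
        - 2 * n * α * β ^ 2 * q ^ 2)) * FF +
      ((3 * n * α ^ 3 + 24 * n ^ 2 * β ^ 2) * p ^ 3 + n * α ^ 2 * β * p ^ 2 * q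
        - (α ^ 4 + 16 * n * α * β ^ 2) * p * q ^ 2 + 2 * α ^ 3 * β * q ^ 3) * BB
      = 4 * n ^ 3 * M₁ * p ^ 6 * q := by
    rw [hFFdef, hBBdef, hM₁def]; ring
  have hk1 : k ∣ (4 * n ^ 3 * M₁ * q) * q ^ 6 := by
    have h1 : k ∣ 4 * M₁ * q ^ 7 := hI1 ▸ dvd_add (hkF.mul_left _) (hkB.mul_left _)
    have h2 : (4 * n ^ 3 * M₁ * q) * q ^ 6 = n ^ 3 * (4 * M₁ * q ^ 7) := by ring
    rw [h2]; exact h1.mul_left _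
  have hk2 : k ∣ (4 * n ^ 3 * M₁ * q) * p ^ 6 := by
    have h1 : k ∣ 4 * n ^ 3 * M₁ * p ^ 6 * q :=
      hI2 ▸ dvd_add (hkF.mul_left _) (hkB.mul_left _)
    have h2 : (4 * n ^ 3 * M₁ * q) * p ^ 6 = 4 * n ^ 3 * M₁ * p ^ 6 * q := by ring
    rw [h2]; exact h1
  have hcopq : IsCoprime (q ^ 6) (p ^ 6) := by
    have hco : IsCoprime p q := by
      rw [Int.isCoprime_iff_gcd_eq_one]
      simpa [Int.gcd, hpdef, hqdef] using u.reduced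
    exact (hco.symm).pow
  have hkdvd : k ∣ 4 * n ^ 3 * M₁ * q := by
    obtain ⟨x, y, hxy⟩ := hcopq
    have hxy' : 4 * n ^ 3 * M₁ * q =
        x * ((4 * n ^ 3 * M₁ * q) * q ^ 6) + y * ((4 * n ^ 3 * M₁ * q) * p ^ 6) := by
      linear_combination (4 * n ^ 3 * M₁ * q) * hxy.symm
    rw [hxy']
    exact dvd_add (hk1.mul_left x) (hk2.mul_left y)
  have htgt0 : 4 * n ^ 3 * M₁ * q ≠ 0 := by
    have : n ^ 3 ≠ 0 := pow_ne_zero 3 hn.ne'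
    have hq' : q ≠ 0 := hq0.ne'
    intro h; rcases mul_eq_zero.mp h with h' | h'
    · rcases mul_eq_zero.mp h' with h'' | h''
      · rcases mul_eq_zero.mp h'' with h3 | h3
        · norm_num at h3
        · exact this h3
      · exact hM₁ h''
    · exact hq' h'
  have habsk : |k| ≤ 4 * n ^ 3 * |M₁| * q := by
    have h1 : |k| ≤ |4 * n ^ 3 * M₁ * q| :=
      Int.le_of_dvd (abs_pos.mpr htgt0) ((abs_dvd _ _).mpr ((dvd_abs _ _).mpr hkdvd))
    have h2 : |4 * n ^ 3 * M₁ * q| = 4 * n ^ 3 * |M₁| * q := by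
      rw [abs_mul, abs_mul, abs_mul, abs_of_pos hq0, abs_pow, abs_of_pos hn]
      norm_num
    linarith [h1, h2.le]
  clear_value r
  set m : ℤ := ht u with hmdef
  have hm : m = max |p| q := by rw [hmdef, ht, hpdef, hqdef]
  clear_value m
  have hm1 : (1:ℤ) ≤ m := by rw [hmdef]; exact one_le_ht u
  have hm0 : (0:ℤ) < m := by linarith
  have hpm : |p| ≤ m := by rw [hm]; exact le_max_left _ _
  have hqm : q ≤ m := by rw [hm]; exact le_max_right _ _
  have hqam : |q| ≤ m := by rw [abs_of_pos hq0]; exact hqm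
  have htr1 : (1:ℤ) ≤ ht r := one_le_ht r
  have htr0 : (0:ℤ) ≤ ht r := by linarith
  have hrdenpos : (0:ℤ) < (r.den : ℤ) := by exact_mod_cast r.pos
  have hmaxFB : max |FF| |BB| = |k| * ht r := by
    have h1 : |FF| = |r.num| * |k| := by rw [hFFk, abs_mul]
    have h2 : |BB| = (r.den : ℤ) * |k| := by rw [hk, abs_mul, abs_of_pos hrdenpos]
    rw [h1, h2, ← max_mul_of_nonneg _ _ (abs_nonneg k)]
    rw [ht]
    ring
  have hM₁pos : (0:ℤ) < |M₁| := abs_pos.mpr hM₁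
  have hcof11 : |12 * n * p ^ 2 * q + 16 * α * q ^ 3| ≤ KA * m ^ 3 := by
    have he : 12 * n * p ^ 2 * q + 16 * α * q ^ 3 =
        0 * p ^ 3 + (12 * n) * p ^ 2 * q + 0 * p * q ^ 2 + (16 * α) * q ^ 3 := by ring
    rw [he, hKAdef]
    exact abs_comb3 0 (12 * n) 0 (16 * α) p q m hpm hqam
  have hcof12 : |(-3) * n * p ^ 3 + 5 * α * p * q ^ 2 + 27 * β * q ^ 3| ≤ KB * m ^ 3 := by
    have he : (-3) * n * p ^ 3 + 5 * α * p * q ^ 2 + 27 * β * q ^ 3 =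
        ((-3) * n) * p ^ 3 + 0 * p ^ 2 * q + (5 * α) * p * q ^ 2 + (27 * β) * q ^ 3 := by ring
    rw [he, hKBdef]
    exact abs_comb3 ((-3) * n) 0 (5 * α) (27 * β) p q m hpm hqam
  have hcof21 : |4 * q * ((n * α ^ 3 + 3 * n ^ 2 * β ^ 2) * p ^ 2 - n * α ^ 2 * β * p * q
      - 2 * n * α * β ^ 2 * q ^ 2)| ≤ KC * m ^ 3 := by
    have he : 4 * q * ((n * α ^ 3 + 3 * n ^ 2 * β ^ 2) * p ^ 2 - n * α ^ 2 * β * p * q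
        - 2 * n * α * β ^ 2 * q ^ 2) =
        0 * p ^ 3 + (4 * n * α ^ 3 + 12 * n ^ 2 * β ^ 2) * p ^ 2 * q
          + (-(4 * n * α ^ 2 * β)) * p * q ^ 2 + (-(8 * n * α * β ^ 2)) * q ^ 3 := by ring
    rw [he, hKCdef]
    exact abs_comb3 0 (4 * n * α ^ 3 + 12 * n ^ 2 * β ^ 2) (-(4 * n * α ^ 2 * β))
      (-(8 * n * α * β ^ 2)) p q m hpm hqam
  have hcof22 : |(3 * n * α ^ 3 + 24 * n ^ 2 * β ^ 2) * p ^ 3 + n * α ^ 2 * β * p ^ 2 * q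
      - (α ^ 4 + 16 * n * α * β ^ 2) * p * q ^ 2 + 2 * α ^ 3 * β * q ^ 3| ≤ KD * m ^ 3 := by
    have he : (3 * n * α ^ 3 + 24 * n ^ 2 * β ^ 2) * p ^ 3 + n * α ^ 2 * β * p ^ 2 * q
        - (α ^ 4 + 16 * n * α * β ^ 2) * p * q ^ 2 + 2 * α ^ 3 * β * q ^ 3 =
        (3 * n * α ^ 3 + 24 * n ^ 2 * β ^ 2) * p ^ 3 + (n * α ^ 2 * β) * p ^ 2 * q
          + (-(α ^ 4 + 16 * n * α * β ^ 2)) * p * q ^ 2 + (2 * α ^ 3 * β) * q ^ 3 := by ring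
    rw [he, hKDdef]
    exact abs_comb3 (3 * n * α ^ 3 + 24 * n ^ 2 * β ^ 2) (n * α ^ 2 * β)
      (-(α ^ 4 + 16 * n * α * β ^ 2)) (2 * α ^ 3 * β) p q m hpm hqam
  have hFFle : |FF| ≤ |k| * ht r := hmaxFB ▸ le_max_left _ _
  have hBBle : |BB| ≤ |k| * ht r := hmaxFB ▸ le_max_right _ _
  have hkhtr : |k| * ht r ≤ (4 * n ^ 3 * |M₁| * q) * ht r :=
    mul_le_mul_of_nonneg_right habsk htr0
  have hkhtr0 : (0:ℤ) ≤ |k| * ht r := mul_nonneg (abs_nonneg k) htr0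
  rcases le_total |p| q with hle | hle
  · -- q is the max
    have hmq : m = q := by rw [hm]; exact max_eq_right hle
    have main : 4 * |M₁| * m ^ 7 ≤ (4 * |M₁|) * (((KA + KB) * n ^ 3 * ht r) * m ^ 4) := by
      calc 4 * |M₁| * m ^ 7 = |4 * M₁ * q ^ 7| := by
            rw [abs_mul, abs_mul, abs_pow, abs_of_pos hq0, hmq]; norm_num
        _ = |(12 * n * p ^ 2 * q + 16 * α * q ^ 3) * FF +
              ((-3) * n * p ^ 3 + 5 * α * p * q ^ 2 + 27 * β * q ^ 3) * BB| := by
            rw [← hI1]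
        _ ≤ |(12 * n * p ^ 2 * q + 16 * α * q ^ 3) * FF| +
              |((-3) * n * p ^ 3 + 5 * α * p * q ^ 2 + 27 * β * q ^ 3) * BB| := abs_add_le _ _
        _ = |12 * n * p ^ 2 * q + 16 * α * q ^ 3| * |FF| +
              |(-3) * n * p ^ 3 + 5 * α * p * q ^ 2 + 27 * β * q ^ 3| * |BB| := by
            rw [abs_mul, abs_mul]
        _ ≤ (KA * m ^ 3) * (|k| * ht r) + (KB * m ^ 3) * (|k| * ht r) := by
            apply add_le_add
            · exact mul_le_mul hcof11 hFFle (abs_nonneg _)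
                (mul_nonneg hKA0 (pow_nonneg hm0.le 3))
            · exact mul_le_mul hcof12 hBBle (abs_nonneg _)
                (mul_nonneg hKB0 (pow_nonneg hm0.le 3))
        _ = ((KA + KB) * m ^ 3) * (|k| * ht r) := by ring
        _ ≤ ((KA + KB) * m ^ 3) * ((4 * n ^ 3 * |M₁| * q) * ht r) := by
            exact mul_le_mul_of_nonneg_left hkhtr
              (mul_nonneg (by linarith : (0:ℤ) ≤ KA + KB) (pow_nonneg hm0.le 3))
        _ = (4 * |M₁|) * (((KA + KB) * n ^ 3 * ht r) * m ^ 4) := by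
            rw [hmq]; ring
    have h7 : m ^ 7 ≤ ((KA + KB) * n ^ 3 * ht r) * m ^ 4 :=
      le_of_mul_le_mul_left main (by linarith)
    have h3 : m ^ 3 ≤ (KA + KB) * n ^ 3 * ht r := by
      have h7' : m ^ 3 * m ^ 4 ≤ ((KA + KB) * n ^ 3 * ht r) * m ^ 4 := by
        calc m ^ 3 * m ^ 4 = m ^ 7 := by ring
          _ ≤ _ := h7
      exact le_of_mul_le_mul_right h7' (pow_pos hm0 4)
    calc m ^ 3 ≤ (KA + KB) * n ^ 3 * ht r := h3
      _ ≤ C * ht r := by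
        apply mul_le_mul_of_nonneg_right _ htr0
        rw [hCdef]; linarith
  · -- |p| is the max
    have hmp : m = |p| := by rw [hm]; exact max_eq_left hle
    have main : (4 * n ^ 3 * |M₁| * q) * m ^ 6 ≤
        (4 * n ^ 3 * |M₁| * q) * ((KC + KD) * m ^ 3 * ht r) := by
      calc (4 * n ^ 3 * |M₁| * q) * m ^ 6 = |4 * n ^ 3 * M₁ * p ^ 6 * q| := by
            rw [hmp, abs_mul, abs_mul, abs_mul, abs_mul, abs_pow, abs_pow, abs_of_pos hq0,
              abs_of_pos hn]
            norm_num
            ring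
        _ = |(4 * q * ((n * α ^ 3 + 3 * n ^ 2 * β ^ 2) * p ^ 2 - n * α ^ 2 * β * p * q
              - 2 * n * α * β ^ 2 * q ^ 2)) * FF +
              ((3 * n * α ^ 3 + 24 * n ^ 2 * β ^ 2) * p ^ 3 + n * α ^ 2 * β * p ^ 2 * q
              - (α ^ 4 + 16 * n * α * β ^ 2) * p * q ^ 2 + 2 * α ^ 3 * β * q ^ 3) * BB| := by
            rw [hI2]
        _ ≤ |(4 * q * ((n * α ^ 3 + 3 * n ^ 2 * β ^ 2) * p ^ 2 - n * α ^ 2 * β * p * q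
              - 2 * n * α * β ^ 2 * q ^ 2)) * FF| +
              |((3 * n * α ^ 3 + 24 * n ^ 2 * β ^ 2) * p ^ 3 + n * α ^ 2 * β * p ^ 2 * q
              - (α ^ 4 + 16 * n * α * β ^ 2) * p * q ^ 2 + 2 * α ^ 3 * β * q ^ 3) * BB| :=
            abs_add_le _ _
        _ = |4 * q * ((n * α ^ 3 + 3 * n ^ 2 * β ^ 2) * p ^ 2 - n * α ^ 2 * β * p * q
              - 2 * n * α * β ^ 2 * q ^ 2)| * |FF| +
              |(3 * n * α ^ 3 + 24 * n ^ 2 * β ^ 2) * p ^ 3 + n * α ^ 2 * β * p ^ 2 * q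
              - (α ^ 4 + 16 * n * α * β ^ 2) * p * q ^ 2 + 2 * α ^ 3 * β * q ^ 3| * |BB| := by
            simp only [abs_mul]
        _ ≤ (KC * m ^ 3) * (|k| * ht r) + (KD * m ^ 3) * (|k| * ht r) := by
            apply add_le_add
            · exact mul_le_mul hcof21 hFFle (abs_nonneg _)
                (mul_nonneg hKC0 (pow_nonneg hm0.le 3))
            · exact mul_le_mul hcof22 hBBle (abs_nonneg _)
                (mul_nonneg hKD0 (pow_nonneg hm0.le 3))
        _ = ((KC + KD) * m ^ 3) * (|k| * ht r) := by ring
        _ ≤ ((KC + KD) * m ^ 3) * ((4 * n ^ 3 * |M₁| * q) * ht r) := by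
            exact mul_le_mul_of_nonneg_left hkhtr
              (mul_nonneg (by linarith : (0:ℤ) ≤ KC + KD) (pow_nonneg hm0.le 3))
        _ = (4 * n ^ 3 * |M₁| * q) * ((KC + KD) * m ^ 3 * ht r) := by ring
    have h6 : m ^ 6 ≤ (KC + KD) * m ^ 3 * ht r :=
      le_of_mul_le_mul_left main
        (mul_pos (mul_pos (mul_pos (by norm_num : (0:ℤ) < 4) (pow_pos hn 3)) hM₁pos) hq0)
    have h3 : m ^ 3 ≤ (KC + KD) * ht r := by
      have h6' : m ^ 3 * m ^ 3 ≤ ((KC + KD) * ht r) * m ^ 3 := by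
        calc m ^ 3 * m ^ 3 = m ^ 6 := by ring
          _ ≤ (KC + KD) * m ^ 3 * ht r := h6
          _ = ((KC + KD) * ht r) * m ^ 3 := by ring
      exact le_of_mul_le_mul_right h6' (pow_pos hm0 3)
    calc m ^ 3 ≤ (KC + KD) * ht r := h3
      _ ≤ C * ht r := by
        apply mul_le_mul_of_nonneg_right _ htr0
        have h1 : 0 ≤ (KA + KB) * n ^ 3 := mul_nonneg (by linarith) (pow_pos hn 3).le
        rw [hCdef]; linarith



lemma finite_ht_le (Bd : ℤ) : {r : ℚ | ht r ≤ Bd}.Finite := by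
  have himg : (fun r : ℚ => (r.num, (r.den : ℤ))) '' {r : ℚ | ht r ≤ Bd} ⊆
      Set.Icc (-Bd) Bd ×ˢ Set.Icc (-Bd) Bd := by
    rintro ⟨a, b⟩ ⟨r, hr, heq⟩
    simp only [Set.mem_setOf_eq, ht, max_le_iff] at hr
    obtain ⟨h1, h2⟩ := hr
    have hden : (1 : ℤ) ≤ (r.den : ℤ) := by exact_mod_cast r.pos
    rw [Prod.mk.injEq] at heq
    obtain ⟨ha, hb⟩ := heq
    subst ha; subst hb
    rw [abs_le] at h1
    exact ⟨Set.mem_Icc.mpr h1, Set.mem_Icc.mpr ⟨by linarith, h2⟩⟩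
  apply Set.Finite.of_finite_image
    (Set.Finite.subset ((Set.finite_Icc (-Bd) Bd).prod (Set.finite_Icc (-Bd) Bd)) himg)
  intro a _ b _ hab
  simp only [Prod.mk.injEq] at hab
  exact Rat.ext hab.1 (by exact_mod_cast hab.2)




open WeierstrassCurve.Affine in
/-- x-coordinate of an affine point (0 for the point at infinity). -/
def ptx {F : Type*} [Field F] {W : WeierstrassCurve.Affine F} : W.Point → F
  | .zero => 0
  | @Point.some _ _ _ x _ _ => x

open WeierstrassCurve.Affine in
/-- y-coordinate of an affine point (0 for the point at infinity). -/
def pty {F : Type*} [Field F] {W : WeierstrassCurve.Affine F} : W.Point → F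
  | .zero => 0
  | @Point.some _ _ _ _ y _ => y

section TwistFacts

open WeierstrassCurve WeierstrassCurve.Affine

variable {g₂ g₃ D : ℚ}

lemma twist_equation {x y : ℚ}
    (h : (twistCurve g₂ g₃ D).toAffine.Equation x y) :
    y ^ 2 = x ^ 3 - g₂ * D ^ 2 * x - g₃ * D ^ 3 := by
  rw [equation_iff] at h
  simp [twistCurve] at h
  linarith

lemma twist_negY (x y : ℚ) :
    (twistCurve g₂ g₃ D).toAffine.negY x y = -y := by
  simp [negY, twistCurve]

lemma twist_double {x y : ℚ} (h : (twistCurve g₂ g₃ D).toAffine.Nonsingular x y)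
    (hy : y ≠ 0) :
    ptx (WeierstrassCurve.Affine.Point.some x y h + WeierstrassCurve.Affine.Point.some x y h) =
      ((3 * x ^ 2 - g₂ * D ^ 2) / (2 * y)) ^ 2 - 2 * x := by
  have hy' : y ≠ (twistCurve g₂ g₃ D).toAffine.negY x y := by
    rw [twist_negY]; intro hc; apply hy; linarith [hc]
  rw [Point.add_self_of_Y_ne hy']
  show (twistCurve g₂ g₃ D).toAffine.addX x x
      ((twistCurve g₂ g₃ D).toAffine.slope x x y y) = _
  rw [addX, slope_of_Y_ne rfl hy', twist_negY]
  have ha₁ : (twistCurve g₂ g₃ D).toAffine.a₁ = 0 := rfl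
  have ha₂ : (twistCurve g₂ g₃ D).toAffine.a₂ = 0 := rfl
  have ha₄ : (twistCurve g₂ g₃ D).toAffine.a₄ = -(g₂ * D ^ 2) := rfl
  rw [ha₁, ha₂, ha₄]
  have h2y : y - -y = 2 * y := by ring
  rw [h2y]
  ring

lemma twist_fcub_mul {x y : ℚ} (heq : y ^ 2 = x ^ 3 - g₂ * D ^ 2 * x - g₃ * D ^ 3)
    (hD : D ≠ 0) : fcub g₂ g₃ (x / D) * D ^ 3 = y ^ 2 := by
  rw [fcub]
  field_simp
  linear_combination -heq

lemma twist_fcub_ne {x y : ℚ} (heq : y ^ 2 = x ^ 3 - g₂ * D ^ 2 * x - g₃ * D ^ 3)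
    (hy : y ≠ 0) (hD : D ≠ 0) : fcub g₂ g₃ (x / D) ≠ 0 := by
  intro h0
  have h := twist_fcub_mul heq hD
  rw [h0, zero_mul] at h
  exact hy ((pow_eq_zero_iff (two_ne_zero)).mp h.symm)

lemma twist_square {x y : ℚ} (heq : y ^ 2 = x ^ 3 - g₂ * D ^ 2 * x - g₃ * D ^ 3)
    (hD : D ≠ 0) : (y / D) ^ 2 = D * fcub g₂ g₃ (x / D) := by
  rw [fcub]
  field_simp
  linear_combination heq

lemma twist_dup_identity {x y : ℚ} (heq : y ^ 2 = x ^ 3 - g₂ * D ^ 2 * x - g₃ * D ^ 3)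
    (hy : y ≠ 0) (hD : D ≠ 0) :
    ((3 * x ^ 2 - g₂ * D ^ 2) / (2 * y)) ^ 2 - 2 * x = D * dup g₂ g₃ (x / D) := by
  have hf := twist_fcub_ne heq hy hD
  rw [fcub] at hf
  have hden : x ^ 3 - g₂ * D ^ 2 * x - g₃ * D ^ 3 ≠ 0 := heq ▸ pow_ne_zero 2 hy
  have h1 : 4 * ((x / D) ^ 3 - g₂ * (x / D) - g₃) ≠ 0 :=
    mul_ne_zero four_ne_zero hf
  have h2 : 4 * D * (x ^ 3 - g₂ * D ^ 2 * x - g₃ * D ^ 3) ≠ 0 :=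
    mul_ne_zero (mul_ne_zero four_ne_zero hD) hden
  have hdup : dup g₂ g₃ (x / D) =
      (x ^ 4 + 2 * g₂ * D ^ 2 * x ^ 2 + 8 * g₃ * D ^ 3 * x + g₂ ^ 2 * D ^ 4) /
        (4 * D * (x ^ 3 - g₂ * D ^ 2 * x - g₃ * D ^ 3)) := by
    rw [dup, div_eq_div_iff h1 h2]
    field_simp
  rw [hdup, div_pow, mul_pow, heq]
  rw [mul_div_assoc', mul_comm (4:ℚ) D, mul_assoc D, mul_div_mul_left _ _ hD, div_sub' (by norm_num [hden]),
    div_eq_div_iff (by norm_num [hden]) (by norm_num [hden])]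
  ring

end TwistFacts

section Orbit

open WeierstrassCurve WeierstrassCurve.Affine

variable {g₂ g₃ : ℚ}

lemma ptx_some {D x y : ℚ} (h : (twistCurve g₂ g₃ D).toAffine.Nonsingular x y) :
    ptx (Point.some x y h) = x := rfl

lemma pty_some {D x y : ℚ} (h : (twistCurve g₂ g₃ D).toAffine.Nonsingular x y) :
    pty (Point.some x y h) = y := rfl

lemma twist_step {D : ℚ} (hD : D ≠ 0) (Q : (twistCurve g₂ g₃ D).toAffine.Point)
    (hQ : Q ≠ 0) (hy : pty Q ≠ 0) :
    fcub g₂ g₃ (ptx Q / D) ≠ 0 ∧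
    ptx (Q + Q) / D = dup g₂ g₃ (ptx Q / D) ∧
    Q + Q ≠ 0 ∧
    (pty (Q + Q) = 0 → fcub g₂ g₃ (ptx (Q + Q) / D) = 0) ∧
    (∃ v : ℚ, v ^ 2 = D * fcub g₂ g₃ (ptx Q / D)) := by
  induction Q with
  | zero => exact absurd rfl hQ
  | @some x y h =>
    rw [pty_some] at hy
    rw [ptx_some]
    have heq := twist_equation h.1
    have hy' : y ≠ (twistCurve g₂ g₃ D).toAffine.negY x y := by
      rw [twist_negY]; intro hc; apply hy; linarith
    refine ⟨twist_fcub_ne heq hy hD, ?_, ?_, ?_, y / D, twist_square heq hD⟩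
    · rw [twist_double h hy, twist_dup_identity heq hy hD,
        mul_div_cancel_left₀ _ hD]
    · rw [Point.add_self_of_Y_ne hy']
      exact Point.some_ne_zero _
    · intro hy2
      rw [Point.add_self_of_Y_ne hy'] at hy2 ⊢
      rw [pty_some] at hy2
      rw [ptx_some]
      have heq2 := twist_equation (nonsingular_add h h fun hc => hy' hc.2).1
      rw [hy2] at heq2
      have hmul := twist_fcub_mul heq2 hD
      have hD3 : D ^ 3 ≠ 0 := pow_ne_zero 3 hD
      have : fcub g₂ g₃
          ((twistCurve g₂ g₃ D).toAffine.addX x x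
            ((twistCurve g₂ g₃ D).toAffine.slope x x y y) / D) * D ^ 3 = 0 := by
        rw [hmul]; norm_num
      exact (mul_eq_zero.mp this).resolve_right hD3

lemma twist_witness (C T : ℤ) (hC : 1 ≤ C)
    (hgrow : ∀ u : ℚ, fcub g₂ g₃ u ≠ 0 → (ht u) ^ 3 ≤ C * ht (dup g₂ g₃ u))
    (hT : ∀ u : ℚ, fcub g₂ g₃ u = 0 → ht u ≤ T)
    {D : ℚ} (hD : D ≠ 0)
    (P : (twistCurve g₂ g₃ D).toAffine.Point)
    (hfin : IsOfFinAddOrder P) (hord : 2 < addOrderOf P) :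
    ∃ u : ℚ, ht u ≤ max T C ∧ fcub g₂ g₃ u ≠ 0 ∧
      ∃ v : ℚ, v ^ 2 = D * fcub g₂ g₃ u := by
  classical
  set Bd : ℤ := max T C with hBddef
  have hTB : T ≤ Bd := le_max_left _ _
  have hCB : C ≤ Bd := le_max_right _ _
  set n₀ : ℕ := addOrderOf P with hn₀def
  have hn₀ : 0 < n₀ := hfin.addOrderOf_pos
  set Z : ℕ → (twistCurve g₂ g₃ D).toAffine.Point := fun k => 2 ^ k • P with hZdef
  have hZ0 : Z 0 = P := by show (2 ^ 0 : ℕ) • P = P; simp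
  have hZs : ∀ k, Z (k + 1) = Z k + Z k := by
    intro k
    show (2 ^ (k + 1) : ℕ) • P = (2 ^ k : ℕ) • P + (2 ^ k : ℕ) • P
    rw [pow_succ, mul_two, add_nsmul]
  set u : ℕ → ℚ := fun k => ptx (Z k) / D with hudef
  set Good : ℕ → Prop := fun k => Z k ≠ 0 ∧ pty (Z k) ≠ 0 with hGooddef
  have hGood0 : Good 0 := by
    show Z 0 ≠ 0 ∧ pty (Z 0) ≠ 0
    rw [hZ0]
    have hP0 : P ≠ 0 := by
      intro h0
      have h1 : n₀ = 1 := by rw [hn₀def, h0]; exact addOrderOf_zero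
      omega
    refine ⟨hP0, ?_⟩
    intro hy0
    have h2P : P + P = 0 := by
      induction P with
      | zero => exact absurd rfl hP0
      | @some x y h =>
        apply Point.add_self_of_Y_eq
        rw [twist_negY]
        rw [pty_some] at hy0
        rw [hy0]; norm_num
    have h2n : (2 : ℕ) • P = 0 := by rw [two_nsmul]; exact h2P
    have hdvd := addOrderOf_dvd_of_nsmul_eq_zero h2n
    have h2' : n₀ ∣ 2 := by rw [hn₀def]; exact hdvd
    have := Nat.le_of_dvd (by norm_num) h2'
    omega
  have hstepk : ∀ k, Good k →
      fcub g₂ g₃ (u k) ≠ 0 ∧ u (k + 1) = dup g₂ g₃ (u k) ∧ Z (k + 1) ≠ 0 ∧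
      (pty (Z (k + 1)) = 0 → fcub g₂ g₃ (u (k + 1)) = 0) ∧
      (∃ v : ℚ, v ^ 2 = D * fcub g₂ g₃ (u k)) := by
    intro k hk
    obtain ⟨h1, h2⟩ := hk
    have := twist_step hD (Z k) h1 h2
    rw [← hZs k] at this
    exact ⟨this.1, this.2.1, this.2.2.1, this.2.2.2.1, this.2.2.2.2⟩
  have hinc : ∀ k, Good k → Bd < ht (u k) → Bd < ht (u (k + 1)) ∧ ht (u k) < ht (u (k + 1)) := by
    intro k hk hbig
    obtain ⟨hf, hdup, -, -, -⟩ := hstepk k hk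
    have hgr := hgrow (u k) hf
    rw [← hdup] at hgr
    have hH1 : 1 ≤ ht (u k) := one_le_ht _
    have hH1' : 1 ≤ ht (u (k + 1)) := one_le_ht _
    have hCH : C < ht (u k) := by omega
    have key : ht (u k) * ht (u k) < ht (u (k + 1)) := by
      have h1 : C * (ht (u k) * ht (u k)) < ht (u k) * (ht (u k) * ht (u k)) :=
        mul_lt_mul_of_pos_right hCH (by positivity)
      have h2 : ht (u k) * (ht (u k) * ht (u k)) = ht (u k) ^ 3 := by ring
      have h3 : C * (ht (u k) * ht (u k)) < C * ht (u (k + 1)) := by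
        rw [h2] at h1; omega
      exact lt_of_mul_lt_mul_left h3 (by omega)
    constructor
    · nlinarith
    · nlinarith
  have hle0 : ht (u 0) ≤ Bd := by
    by_contra hbig
    push_neg at hbig
    by_cases hall : ∀ k, Good k
    · have hBdall : ∀ k, Bd < ht (u k) := by
        intro k
        induction k with
        | zero => exact hbig
        | succ j ih => exact (hinc j (hall j) ih).1
      have hmono : StrictMono fun k => ht (u k) :=
        strictMono_nat_of_lt_succ fun k => (hinc k (hall k) (hBdall k)).2
      haveI : NeZero n₀ := ⟨hn₀.ne'⟩
      obtain ⟨k, l, hne, hfeq⟩ :=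
        Finite.exists_ne_map_eq_of_infinite fun k : ℕ => ((2 ^ k : ℕ) : ZMod n₀)
      have hZeq : ∀ a b : ℕ, a < b → (2 ^ a : ℕ) ≡ 2 ^ b [MOD n₀] → Z a = Z b := by
        intro a b hab hmod
        have hle : (2 : ℕ) ^ a ≤ 2 ^ b := Nat.pow_le_pow_right (by norm_num) hab.le
        obtain ⟨t, htt⟩ := (Nat.modEq_iff_dvd' hle).mp hmod
        have hexp : (2 : ℕ) ^ b = 2 ^ a + n₀ * t := by omega
        have hdvd : addOrderOf P ∣ n₀ * t := ⟨t, rfl⟩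
        have hzero : (n₀ * t) • P = 0 := addOrderOf_dvd_iff_nsmul_eq_zero.mp hdvd
        show (2 ^ a : ℕ) • P = (2 ^ b : ℕ) • P
        rw [hexp, add_nsmul, hzero, add_zero]
      have hmod : (2 ^ k : ℕ) ≡ 2 ^ l [MOD n₀] := (ZMod.natCast_eq_natCast_iff _ _ _).mp hfeq
      have hukl : ht (u k) = ht (u l) := by
        rcases hne.lt_or_gt with h | h
        · show ht (ptx (Z k) / D) = ht (ptx (Z l) / D)
          rw [hZeq k l h hmod]
        · show ht (ptx (Z k) / D) = ht (ptx (Z l) / D)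
          rw [hZeq l k h hmod.symm]
      exact hne (hmono.injective hukl)
    · push_neg at hall
      set k₀ : ℕ := Nat.find hall with hk₀def
      have hk₀ : ¬ Good k₀ := by rw [hk₀def]; exact Nat.find_spec hall
      have hmin : ∀ j, j < k₀ → Good j := by
        intro j hj
        by_contra hj'
        have h1 : Nat.find hall ≤ j := Nat.find_le hj'
        rw [← hk₀def] at h1
        omega
      have hk₀pos : 0 < k₀ := by
        rcases Nat.eq_zero_or_pos k₀ with h | h
        · rw [h] at hk₀; exact absurd hGood0 hk₀
        · exact h
      have hBdle : ∀ j, j ≤ k₀ → Bd < ht (u j) := by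
        intro j hj
        induction j with
        | zero => exact hbig
        | succ i ih =>
          have hi : i < k₀ := by omega
          exact (hinc i (hmin i hi) (ih (by omega))).1
      have hk₁ : k₀ - 1 < k₀ := by omega
      obtain ⟨-, -, hZne, himp, -⟩ := hstepk (k₀ - 1) (hmin _ hk₁)
      have hsucc : k₀ - 1 + 1 = k₀ := by omega
      rw [hsucc] at hZne himp
      have hpty : pty (Z k₀) = 0 := by
        by_contra hne'
        exact hk₀ ⟨hZne, hne'⟩
      have hfc := himp hpty
      have := hT (u k₀) hfc
      have := hBdle k₀ le_rfl
      omega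
  obtain ⟨hfc0, -, -, -, hv⟩ := hstepk 0 hGood0
  exact ⟨u 0, hle0, hfc0, hv⟩

end Orbit



lemma sq_rat_int (a : ℤ) (w : ℚ) (h : w ^ 2 = (a : ℚ)) : ∃ c : ℤ, c ^ 2 = a := by
  have hww : w * w = (a : ℚ) := by rw [← h]; ring
  have hden : w.den * w.den = 1 := by
    rw [← Rat.mul_self_den, hww, Rat.den_intCast]
  have hd1 : w.den = 1 := by
    nlinarith [hden, w.pos]
  have hw : (w.num : ℚ) = w := (Rat.den_eq_one_iff w).mp hd1
  refine ⟨w.num, ?_⟩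
  have : ((w.num : ℚ)) ^ 2 = (a : ℚ) := by rw [hw]; exact h
  exact_mod_cast this

lemma squarefree_eq_of_mul_sq {D D' c : ℤ} (hD : Squarefree D) (hD' : Squarefree D')
    (h : c ^ 2 = D * D') : D = D' := by
  have hD0 : D ≠ 0 := hD.ne_zero
  have hdvd : D ∣ c := (hD.dvd_pow_iff_dvd two_ne_zero).mp ⟨D', h⟩
  obtain ⟨e, he⟩ := hdvd
  have h3 : D * (D * e ^ 2) = D * D' := by
    rw [← h, he]; ring
  have h2 : D' = D * e ^ 2 := (mul_left_cancel₀ hD0 h3).symm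
  have hunit : IsUnit e := hD' e ⟨D, by rw [h2]; ring⟩
  rcases Int.isUnit_iff.mp hunit with h1 | h1 <;> rw [h2, h1] <;> ring

lemma delta_ne (g₂ g₃ : ℚ) (hΔ : (shortCurve g₂ g₃).Δ ≠ 0) : 4 * g₂ ^ 3 - 27 * g₃ ^ 2 ≠ 0 := by
  intro h
  apply hΔ
  have : (shortCurve g₂ g₃).Δ = 64 * g₂ ^ 3 - 432 * g₃ ^ 2 := by
    simp only [WeierstrassCurve.Δ, WeierstrassCurve.b₂, WeierstrassCurve.b₄,
      WeierstrassCurve.b₆, WeierstrassCurve.b₈, shortCurve]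
    ring
  rw [this]
  linear_combination 16 * h

lemma fcub_roots_finite (g₂ g₃ : ℚ) : {u : ℚ | fcub g₂ g₃ u = 0}.Finite := by
  have hp : (Polynomial.X ^ 3 - Polynomial.C g₂ * Polynomial.X - Polynomial.C g₃ : Polynomial ℚ)
      ≠ 0 := by
    intro h
    have := congrArg (fun p => Polynomial.coeff p 3) h
    simp [Polynomial.coeff_X_pow] at this
  have := Polynomial.finite_setOf_isRoot hp
  apply Set.Finite.subset this
  intro u hu
  simp only [Set.mem_setOf_eq, Polynomial.IsRoot, Polynomial.eval_sub, Polynomial.eval_pow,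
    Polynomial.eval_X, Polynomial.eval_mul, Polynomial.eval_C]
  simpa [fcub] using hu


set_option maxHeartbeats 1000000 in
/-- If `E : y² = x³ − g₂x − g₃` over `ℚ` has nonzero discriminant, then only finitely many
squarefree integers `D` are such that the Mordell–Weil group of the quadratic twist
`E_D : y² = x³ − g₂D²x − g₃D³` contains a point of finite order greater than `2`. -/
theorem finite_twists_with_large_torsion (g₂ g₃ : ℚ) (hΔ : (shortCurve g₂ g₃).Δ ≠ 0) :
    {D : ℤ | Squarefree D ∧
      ∃ P : (twistCurve g₂ g₃ (D : ℚ)).toAffine.Point,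
        IsOfFinAddOrder P ∧ 2 < addOrderOf P}.Finite := by
  classical
  obtain ⟨C, hC1, hgrow⟩ := exists_height_growth g₂ g₃ (delta_ne g₂ g₃ hΔ)
  obtain ⟨T, hT⟩ : ∃ T : ℤ, ∀ u : ℚ, fcub g₂ g₃ u = 0 → ht u ≤ T := by
    obtain ⟨T, hT⟩ := ((fcub_roots_finite g₂ g₃).image ht).bddAbove
    exact ⟨T, fun u hu => hT (Set.mem_image_of_mem ht hu)⟩
  have hwit : ∀ D : ℤ, D ∈ {D : ℤ | Squarefree D ∧
      ∃ P : (twistCurve g₂ g₃ (D : ℚ)).toAffine.Point,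
        IsOfFinAddOrder P ∧ 2 < addOrderOf P} →
      ∃ u : ℚ, (ht u ≤ max T C ∧ fcub g₂ g₃ u ≠ 0) ∧
        ∃ v : ℚ, v ^ 2 = (D : ℚ) * fcub g₂ g₃ u := by
    rintro D ⟨hsf, P, hfin, hord⟩
    have hD : ((D : ℚ)) ≠ 0 := Int.cast_ne_zero.mpr hsf.ne_zero
    obtain ⟨u, h1, h2, v, hv⟩ := twist_witness C T hC1 hgrow hT hD P hfin hord
    exact ⟨u, ⟨h1, h2⟩, v, hv⟩
  choose! f hf using hwit
  apply Set.Finite.of_finite_image (f := f)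
  · apply Set.Finite.subset (finite_ht_le (max T C))
    rintro x ⟨Dd, hDd, rfl⟩
    exact ((hf Dd hDd).1).1
  · intro D hDS D' hD'S heq
    obtain ⟨⟨hu1, hu2⟩, v, hv⟩ := hf D hDS
    obtain ⟨⟨hu1', hu2'⟩, v', hv'⟩ := hf D' hD'S
    rw [heq] at hv hu2
    have h1 : (v * v' / fcub g₂ g₃ (f D')) ^ 2 = ((D * D' : ℤ) : ℚ) := by
      push_cast
      rw [div_pow, mul_pow, hv, hv']
      field_simp
    obtain ⟨c, hc⟩ := sq_rat_int (D * D') _ h1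
    exact squarefree_eq_of_mul_sq hDS.1 hD'S.1 hc
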